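/- In the bilinear coagulation setting, the survival function ρ_t (maximal solution of ρ_t(x) = 1 − exp(−t(Tρ_t)(x)) with T the convolution operator of the kernel k(x,y) = 2∑_{i,j} a_{ij}π_i(x)π_j(y)) takes the form ρ_t(x) = 1 − exp(−∑_{i=1}^n c_t^i π_i(x)) for some nonnegative constants c_t^1,…,c_t^n, where the constants are given by c_t^i = 2t ∑_{j=1}^n a_{ij} ⟨π_j ρ_t, μ₀⟩. -/

import Mathlib

open MeasureTheory

/-- Form of the survival function for a bilinear kernel: the maximal solution of
`ρ(x) = 1 − exp(−t(Tρ)(x))` with `k(x,y) = 2∑ a_{ij} π_i(x) π_j(y)` has the form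
`ρ(x) = 1 − exp(−∑_{i=1}^n c^i π_i(x))` with nonnegative constants
`c^i = 2t ∑_{j=1}^n a_{ij} ⟨π_j ρ, μ₀⟩`. -/
theorem stmt6 {S : Type*} [MeasurableSpace S] (μ₀ : Measure S) [IsFiniteMeasure μ₀]
    (n m : ℕ) (π : Fin (n + m) → S → ℝ)
    (hπmeas : ∀ i, Measurable (π i)) (hπint : ∀ i, Integrable (π i) μ₀)
    (hπnn : ∀ i : Fin (n + m), (i : ℕ) < n → ∀ x, 0 ≤ π i x)
    (R : S → S) (hRmeas : Measurable R)
    (hR : MeasurePreserving R μ₀ μ₀) (hRR : R ∘ R = id)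
    (hπR_even : ∀ i : Fin (n + m), (i : ℕ) < n → (fun x => π i (R x)) = π i)
    (hπR_odd : ∀ i : Fin (n + m), n ≤ (i : ℕ) → (fun x => π i (R x)) = fun x => - π i x)
    (A : Matrix (Fin (n + m)) (Fin (n + m)) ℝ) (hAsymm : A.IsSymm)
    (hblock : ∀ i j : Fin (n + m),
      (((i : ℕ) < n ∧ n ≤ (j : ℕ)) ∨ (n ≤ (i : ℕ) ∧ (j : ℕ) < n)) → A i j = 0)
    (hAplus : ∀ i j : Fin (n + m), (i : ℕ) < n → (j : ℕ) < n → 0 ≤ A i j)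
    (t : ℝ) (ht : 0 < t)
    (ρ : S → ℝ) (hρmeas : Measurable ρ)
    (hρ01 : ∀ x, 0 ≤ ρ x ∧ ρ x ≤ 1)
    (hρfix : ∀ x, ρ x =
      1 - Real.exp (-(t * ∫ y, (2 * ∑ i, ∑ j, A i j * π i x * π j y) * ρ y ∂μ₀)))
    (hρmax : ∀ ρ' : S → ℝ, Measurable ρ' → (∀ x, 0 ≤ ρ' x ∧ ρ' x ≤ 1) →
      (∀ x, ρ' x =
        1 - Real.exp (-(t * ∫ y, (2 * ∑ i, ∑ j, A i j * π i x * π j y) * ρ' y ∂μ₀))) →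
      ∀ x, ρ' x ≤ ρ x) :
    ∃ c : Fin n → ℝ, (∀ i, 0 ≤ c i) ∧
      (∀ x, ρ x = 1 - Real.exp (-(∑ i, c i * π (Fin.castAdd m i) x))) ∧
      (∀ i : Fin n, c i = 2 * t * ∑ j : Fin n,
        A (Fin.castAdd m i) (Fin.castAdd m j) *
          ∫ y, π (Fin.castAdd m j) y * ρ y ∂μ₀) := by
  -- R as a measurable equiv
  have hRinv : ∀ x, R (R x) = x := fun x => congrFun hRR x
  let e : S ≃ᵐ S :=
    { toFun := R, invFun := R, left_inv := hRinv, right_inv := hRinv,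
      measurable_toFun := hRmeas, measurable_invFun := hRmeas }
  have hcomp : ∀ g : S → ℝ, ∫ x, g (R x) ∂μ₀ = ∫ x, g x ∂μ₀ := fun g =>
    hR.integral_comp e.measurableEmbedding g
  -- kernel symmetry
  have hk : ∀ x y, (2 * ∑ i, ∑ j, A i j * π i (R x) * π j (R y))
      = 2 * ∑ i, ∑ j, A i j * π i x * π j y := by
    intro x y
    congr 1
    refine Finset.sum_congr rfl fun i _ => Finset.sum_congr rfl fun j _ => ?_
    rcases lt_or_ge (i : ℕ) n with hi | hi <;> rcases lt_or_ge (j : ℕ) n with hj | hj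
    · rw [congrFun (hπR_even i hi), congrFun (hπR_even j hj)]
    · rw [hblock i j (Or.inl ⟨hi, hj⟩)]; ring
    · rw [hblock i j (Or.inr ⟨hi, hj⟩)]; ring
    · rw [congrFun (hπR_odd i hi), congrFun (hπR_odd j hj)]; ring
  -- ρ is R-invariant
  have hρR : ∀ x, ρ (R x) = ρ x := by
    have h1 : ∀ x, ρ (R x) ≤ ρ x := by
      refine hρmax (fun x => ρ (R x)) (hρmeas.comp hRmeas) (fun x => hρ01 _) fun x => ?_
      show ρ (R x) = 1 - Real.exp
        (-(t * ∫ y, (2 * ∑ i, ∑ j, A i j * π i x * π j y) * ρ (R y) ∂μ₀))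
      rw [hρfix (R x)]
      have : (∫ y, (2 * ∑ i, ∑ j, A i j * π i (R x) * π j y) * ρ y ∂μ₀)
          = ∫ y, (2 * ∑ i, ∑ j, A i j * π i x * π j y) * ρ (R y) ∂μ₀ := by
        rw [← hcomp fun y => (2 * ∑ i, ∑ j, A i j * π i (R x) * π j y) * ρ y]
        refine integral_congr_ae (Filter.Eventually.of_forall fun y => ?_)
        simp only [hk x y]
      rw [this]
    intro x
    have h2 := h1 (R x)
    rw [hRinv x] at h2
    exact le_antisymm (h1 x) h2
  -- integrability
  have hint : ∀ j, Integrable (fun y => π j y * ρ y) μ₀ := by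
    intro j
    have := (hπint j).bdd_mul hρmeas.aestronglyMeasurable (c := 1)
      (Filter.Eventually.of_forall fun x => by rw [Real.norm_eq_abs, abs_le]; constructor <;>
        nlinarith [(hρ01 x).1, (hρ01 x).2])
    simpa [mul_comm] using this
  -- odd moments vanish
  set M : Fin (n + m) → ℝ := fun j => ∫ y, π j y * ρ y ∂μ₀ with hM
  have Modd : ∀ j : Fin (n + m), n ≤ (j : ℕ) → M j = 0 := by
    intro j hj
    have h1 : M j = ∫ y, π j (R y) * ρ (R y) ∂μ₀ := (hcomp fun y => π j y * ρ y).symm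
    have h2 : (∫ y, π j (R y) * ρ (R y) ∂μ₀) = ∫ y, -(π j y * ρ y) ∂μ₀ := by
      refine integral_congr_ae (Filter.Eventually.of_forall fun y => ?_)
      show π j (R y) * ρ (R y) = -(π j y * ρ y)
      rw [congrFun (hπR_odd j hj), hρR]; ring
    rw [h2, integral_neg] at h1
    have h3 : M j = -M j := h1
    linarith
  -- the exponent rearrangement
  have hexp : ∀ x, t * ∫ y, (2 * ∑ i, ∑ j, A i j * π i x * π j y) * ρ y ∂μ₀
      = ∑ i : Fin n, (2 * t * ∑ j : Fin n,
          A (Fin.castAdd m i) (Fin.castAdd m j) * M (Fin.castAdd m j))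
          * π (Fin.castAdd m i) x := by
    intro x
    have hfun : (fun y => (2 * ∑ i, ∑ j, A i j * π i x * π j y) * ρ y)
        = fun y => ∑ i, ∑ j, (2 * (A i j * π i x)) * (π j y * ρ y) := by
      funext y
      simp only [Finset.mul_sum, Finset.sum_mul]
      refine Finset.sum_congr rfl fun i _ => Finset.sum_congr rfl fun j _ => by ring
    have hI : (∫ y, (2 * ∑ i, ∑ j, A i j * π i x * π j y) * ρ y ∂μ₀)
        = ∑ i, ∑ j, (2 * (A i j * π i x)) * M j := by
      rw [hfun, integral_finset_sum _ fun i _ =>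
        integrable_finset_sum _ fun j _ => (hint j).const_mul _]
      refine Finset.sum_congr rfl fun i _ => ?_
      rw [integral_finset_sum _ fun j _ => (hint j).const_mul _]
      exact Finset.sum_congr rfl fun j _ => integral_const_mul _ _
    rw [hI]
    have hsplit : (∑ i, ∑ j, (2 * (A i j * π i x)) * M j)
        = ∑ i : Fin n, ∑ j : Fin n,
            (2 * (A (Fin.castAdd m i) (Fin.castAdd m j) * π (Fin.castAdd m i) x))
              * M (Fin.castAdd m j) := by
      rw [Fin.sum_univ_add]
      have hz : ∀ i : Fin m, (∑ j, (2 * (A (Fin.natAdd n i) j * π (Fin.natAdd n i) x)) * M j) = 0 := by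
        intro i
        refine Finset.sum_eq_zero fun j _ => ?_
        rcases lt_or_ge (j : ℕ) n with hj | hj
        · rw [hblock (Fin.natAdd n i) j (Or.inr ⟨by simp, hj⟩)]; ring
        · rw [Modd j hj]; ring
      rw [Finset.sum_eq_zero fun i _ => hz i, add_zero]
      refine Finset.sum_congr rfl fun i _ => ?_
      rw [Fin.sum_univ_add]
      have : (∑ j : Fin m,
          (2 * (A (Fin.castAdd m i) (Fin.natAdd n j) * π (Fin.castAdd m i) x))
            * M (Fin.natAdd n j)) = 0 := by
        refine Finset.sum_eq_zero fun j _ => ?_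
        rw [hblock (Fin.castAdd m i) (Fin.natAdd n j) (Or.inl ⟨by simpa using i.isLt, by simp⟩)]
        ring
      rw [this, add_zero]
    rw [hsplit, Finset.mul_sum]
    refine Finset.sum_congr rfl fun i _ => ?_
    rw [Finset.mul_sum]
    conv_rhs => rw [Finset.mul_sum, Finset.sum_mul]
    exact Finset.sum_congr rfl fun j _ => by ring
  refine ⟨fun i => 2 * t * ∑ j : Fin n,
      A (Fin.castAdd m i) (Fin.castAdd m j) * M (Fin.castAdd m j), ?_, ?_, fun i => rfl⟩
  · intro i
    have : ∀ j : Fin n, 0 ≤ A (Fin.castAdd m i) (Fin.castAdd m j) * M (Fin.castAdd m j) := by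
      intro j
      refine mul_nonneg (hAplus _ _ (by simpa using i.isLt) (by simpa using j.isLt)) ?_
      exact integral_nonneg fun y =>
        mul_nonneg (hπnn _ (by simpa using j.isLt) y) (hρ01 y).1
    have hs : (0:ℝ) ≤ ∑ j : Fin n,
        A (Fin.castAdd m i) (Fin.castAdd m j) * M (Fin.castAdd m j) :=
      Finset.sum_nonneg fun j _ => this j
    positivity
  · intro x
    rw [hρfix x, hexp x]
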